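/- arXiv:2603.13692 — 3 statements merged into one kernel-verified Lean document; each statement's English description precedes it below -/
import Mathlib

section
/- Let R be a commutative ring and let A →^f B →^g C →^h D be a sequence of R-modules and R-linear maps that is exact at B and at C. Let K be a submodule of B, let π₁ : B → B/K be the canonical surjection, set B₂ = B/K, let C₂ = C/g(K) with canonical surjection π₂ : C → C₂, and let g₂ : B₂ → C₂ be the map induced by g (so that g₂ ∘ π₁ = π₂ ∘ g). Set f₂ = π₁ ∘ f : A → B₂, and let h₂ : C₂ → D be the unique map with h₂ ∘ π₂ = h (which exists since h(g(K)) = 0). Then the sequence A →^{f₂} B₂ →^{g₂} C₂ →^{h₂} D is exact at B₂ and at C₂. -/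
/-- Proposition 2.1(b) (Stability of Exactness, pushout case):
pushing out an exact sequence `A → B → C → D` along the quotient map
`π₁ : B → B/K` yields an exact sequence `A → B/K → C/g(K) → D`. -/
theorem stability_of_exactness_pushout
    {R : Type*} [CommRing R]
    {A B C D : Type*}
    [AddCommGroup A] [Module R A] [AddCommGroup B] [Module R B]
    [AddCommGroup C] [Module R C] [AddCommGroup D] [Module R D]
    (f : A →ₗ[R] B) (g : B →ₗ[R] C) (h : C →ₗ[R] D)
    (hfg : Function.Exact f g) (hgh : Function.Exact g h)
    (K : Submodule R B)
    -- `B₂ = B/K` with canonical surjection `π₁ = K.mkQ`,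
    -- `C₂ = C/g(K)` with canonical surjection `π₂ = (K.map g).mkQ`.
    -- `g₂ : B/K → C/g(K)` is the map induced by `g`:
    (g₂ : (B ⧸ K) →ₗ[R] C ⧸ Submodule.map g K)
    (hg₂ : g₂ ∘ₗ K.mkQ = (Submodule.map g K).mkQ ∘ₗ g)
    -- `h₂ : C/g(K) → D` is the unique map with `h₂ ∘ π₂ = h`:
    (h₂ : (C ⧸ Submodule.map g K) →ₗ[R] D)
    (hh₂ : h₂ ∘ₗ (Submodule.map g K).mkQ = h) :
    -- `f₂ = π₁ ∘ f`; the sequence `A → B₂ → C₂ → D` is exact at `B₂` and `C₂`: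
    Function.Exact (K.mkQ ∘ₗ f) g₂ ∧ Function.Exact g₂ h₂ := by
  have hg₂' : ∀ b, g₂ (K.mkQ b) = (Submodule.map g K).mkQ (g b) := fun b =>
    LinearMap.congr_fun hg₂ b
  have hh₂' : ∀ c, h₂ ((Submodule.map g K).mkQ c) = h c := fun c =>
    LinearMap.congr_fun hh₂ c
  constructor
  · intro y
    obtain ⟨b, rfl⟩ := K.mkQ_surjective y
    constructor
    · intro hy
      rw [hg₂'] at hy
      have hgb : g b ∈ Submodule.map g K := by
        rwa [Submodule.mkQ_apply, Submodule.Quotient.mk_eq_zero] at hy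
      obtain ⟨k, hk, hgk⟩ := hgb
      have : g (b - k) = 0 := by simp [map_sub, hgk]
      obtain ⟨a, ha⟩ := (hfg (b - k)).mp this
      refine ⟨a, ?_⟩
      have : K.mkQ (f a) = K.mkQ (b - k) := congrArg K.mkQ ha
      simpa [Submodule.mkQ_apply, Submodule.Quotient.mk_sub,
        (Submodule.Quotient.mk_eq_zero K).mpr hk] using this
    · rintro ⟨a, ha⟩
      have hb : b - f a ∈ K := by
        have h1 : K.mkQ (f a) = K.mkQ b := ha
        rw [← Submodule.Quotient.mk_eq_zero K, Submodule.Quotient.mk_sub,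
          ← Submodule.mkQ_apply, ← Submodule.mkQ_apply, h1, sub_self]
      rw [hg₂', Submodule.mkQ_apply, Submodule.Quotient.mk_eq_zero]
      have hgfa : g (f a) = 0 := hfg.apply_apply_eq_zero a
      have : g b = g (b - f a) := by simp [map_sub, hgfa]
      rw [this]
      exact ⟨b - f a, hb, rfl⟩
  · intro y
    obtain ⟨c, rfl⟩ := (Submodule.map g K).mkQ_surjective y
    constructor
    · intro hy
      rw [hh₂'] at hy
      obtain ⟨b, hb⟩ := (hgh c).mp hy
      exact ⟨K.mkQ b, by rw [hg₂', hb]⟩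
    · rintro ⟨y, hy⟩
      obtain ⟨b, rfl⟩ := K.mkQ_surjective y
      rw [hg₂'] at hy
      have : c - g b ∈ Submodule.map g K := by
        rw [← Submodule.Quotient.mk_eq_zero, Submodule.Quotient.mk_sub,
          ← Submodule.mkQ_apply, ← Submodule.mkQ_apply, hy, sub_self]
      obtain ⟨k, hk, hgk⟩ := this
      rw [hh₂']
      have : c = g (b + k) := by rw [map_add, hgk]; abel
      rw [this]
      exact hgh.apply_apply_eq_zero (b + k)
end

section
/- Let R be a commutative ring. Let B₁ be a submodule of an R-module B with inclusion i₁ : B₁ → B, and let A →^{f₁} B₁ →^{g₁} C₁ →^{h₁} D be a sequence of R-modules exact at B₁ and at C₁. Let C be the pushout of g₁ : B₁ → C₁ along i₁ : B₁ → B, i.e. C = (C₁ ⊕ B)/N where N = {(g₁(x), −x) : x ∈ B₁}, with structure maps i₂ : C₁ → C, i₂(c₁) = [(c₁, 0)], and g : B → C, g(b) = [(0, b)]. Set f = i₁ ∘ f₁ : A → B, and let h : C → D be the map determined by h ∘ i₂ = h₁ and h ∘ g = 0 (i.e. h([(c₁, b)]) = h₁(c₁), which is well-defined since h₁ ∘ g₁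 = 0). Then the sequence A →^f B →^g C →^h D is exact at B and at C. -/
/-- Proposition 2.2(a) (Lifting of Exactness, pushout case):
given an exact sequence `A → B₁ → C₁ → D` and a submodule inclusion
`i₁ : B₁ ↪ B`, the pushout `C = (C₁ ⊕ B)/N`, `N = {(g₁ x, -x) : x ∈ B₁}`,
yields an exact sequence `A → B → C → D`. -/
theorem lifting_of_exactness_pushout
    {R : Type*} [CommRing R]
    {A B C₁ D : Type*}
    [AddCommGroup A] [Module R A] [AddCommGroup B] [Module R B]
    [AddCommGroup C₁] [Module R C₁] [AddCommGroup D] [Module R D]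
    (B₁ : Submodule R B)
    (f₁ : A →ₗ[R] B₁) (g₁ : B₁ →ₗ[R] C₁) (h₁ : C₁ →ₗ[R] D)
    (hf₁g₁ : Function.Exact f₁ g₁) (hg₁h₁ : Function.Exact g₁ h₁)
    -- the pushout `C = (C₁ × B) ⧸ N`, where `N = {(g₁ x, -x) : x ∈ B₁}`:
    (N : Submodule R (C₁ × B))
    (hN : ∀ z : C₁ × B, z ∈ N ↔ ∃ x : B₁, z = (g₁ x, -(x : B)))
    -- structure maps `i₂ : C₁ → C`, `c₁ ↦ [(c₁, 0)]` and `g : B → C`, `b ↦ [(0, b)]`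
    -- are `N.mkQ ∘ₗ inl` and `N.mkQ ∘ₗ inr`;
    -- `h : C → D` is the map determined by `h ∘ i₂ = h₁` and `h ∘ g = 0`:
    (h : ((C₁ × B) ⧸ N) →ₗ[R] D)
    (hhi₂ : h ∘ₗ (N.mkQ ∘ₗ LinearMap.inl R C₁ B) = h₁)
    (hhg : h ∘ₗ (N.mkQ ∘ₗ LinearMap.inr R C₁ B) = 0) :
    -- with `f = i₁ ∘ f₁`, the sequence `A → B → C → D` is exact at `B` and at `C`:
    Function.Exact (B₁.subtype ∘ₗ f₁) (N.mkQ ∘ₗ LinearMap.inr R C₁ B) ∧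
      Function.Exact (N.mkQ ∘ₗ LinearMap.inr R C₁ B) h := by
  constructor
  · intro b
    simp only [LinearMap.coe_comp, Function.comp_apply, LinearMap.inr_apply,
      Submodule.mkQ_apply, Submodule.Quotient.mk_eq_zero, hN, Set.mem_range]
    constructor
    · rintro ⟨x, hx⟩
      have h1 : (0 : C₁) = g₁ x := congrArg Prod.fst hx
      have h2 : b = -(x : B) := congrArg Prod.snd hx
      obtain ⟨a, ha⟩ := (hf₁g₁ x).mp h1.symm
      exact ⟨-a, by simp [ha, h2]⟩
    · rintro ⟨a, ha⟩
      refine ⟨-(f₁ a), ?_⟩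
      have hz : g₁ (f₁ a) = 0 := hf₁g₁.apply_apply_eq_zero a
      simp [Prod.ext_iff, hz, ← ha]
  · intro c
    obtain ⟨⟨c₁, b⟩, rfl⟩ := Submodule.mkQ_surjective N c
    constructor
    · intro hc
      have hc₁ : h₁ c₁ = 0 := by
        have key : h (N.mkQ (c₁, b)) = h₁ c₁ := by
          have hsplit : (c₁, b) = ((c₁, 0) : C₁ × B) + (0, b) := by simp
          have h0 : h (N.mkQ ((0 : C₁), b)) = 0 := congrFun (congrArg DFunLike.coe hhg) b
          have h1 : h (N.mkQ (c₁, (0:B))) = h₁ c₁ := congrFun (congrArg DFunLike.coe hhi₂) c₁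
          rw [hsplit, map_add, map_add, h0, h1, add_zero]
        rw [← key]; exact hc
      obtain ⟨x, hx⟩ := (hg₁h₁ c₁).mp hc₁
      refine ⟨b + x, ?_⟩
      simp only [LinearMap.coe_comp, Function.comp_apply, LinearMap.inr_apply,
        Submodule.mkQ_apply]
      rw [Submodule.Quotient.eq, hN]
      exact ⟨-x, by simp [← hx]⟩
    · rintro ⟨b', hb'⟩
      rw [← hb']
      exact congrFun (congrArg DFunLike.coe hhg) b'
end

section
/- Let R be a commutative ring. Let π₂ : C → C₂ be a surjective R-linear map of R-modules, and let A →^{f₂} B₂ →^{g₂} C₂ →^{h₂} D be a sequence of R-modules exact at B₂ and at C₂. Let B be the pullback of g₂ : B₂ → C₂ along π₂, i.e. B = {(b₂, c) ∈ B₂ × C : g₂(b₂) = π₂(c)}, with first projection π₁ : B → B₂ and second projection g : B → C. Let f : A → B be given by f(a) = (f₂(a), 0) (well-defined since g₂ ∘ f₂ = 0 by exactness), so π₁ ∘ f = f₂ and g ∘ f = 0, and set h = h₂ ∘ π₂ : C → D. Then the sequence A →^f B →^g C →^h D is exact at B and at C, and moreover π₁ is surjective. -/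
/-- Proposition 2.2(b) (Lifting of Exactness, pullback case):
given an exact sequence `A → B₂ → C₂ → D` and a surjection `π₂ : C → C₂`,
the pullback `B = {(b₂, c) : g₂ b₂ = π₂ c}` yields an exact sequence
`A → B → C → D`, and the first projection `π₁ : B → B₂` is surjective. -/
theorem lifting_of_exactness_pullback
    {R : Type*} [CommRing R]
    {A B₂ C C₂ D : Type*}
    [AddCommGroup A] [Module R A] [AddCommGroup B₂] [Module R B₂]
    [AddCommGroup C] [Module R C] [AddCommGroup C₂] [Module R C₂]
    [AddCommGroup D] [Module R D]
    (π₂ : C →ₗ[R] C₂) (hπ₂ : Function.Surjective π₂)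
    (f₂ : A →ₗ[R] B₂) (g₂ : B₂ →ₗ[R] C₂) (h₂ : C₂ →ₗ[R] D)
    (hf₂g₂ : Function.Exact f₂ g₂) (hg₂h₂ : Function.Exact g₂ h₂)
    -- the pullback `B = {(b₂, c) ∈ B₂ × C : g₂ b₂ = π₂ c}`:
    (P : Submodule R (B₂ × C))
    (hP : ∀ x : B₂ × C, x ∈ P ↔ g₂ x.1 = π₂ x.2)
    -- `f : A → B` is given by `f a = (f₂ a, 0)`:
    (f : A →ₗ[R] P)
    (hf : ∀ a : A, (f a : B₂ × C) = (f₂ a, 0)) :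
    -- with `π₁ = fst ∘ incl`, `g = snd ∘ incl` and `h = h₂ ∘ π₂`, the sequence
    -- `A → B → C → D` is exact at `B` and at `C`, and `π₁` is surjective:
    Function.Exact f ((LinearMap.snd R B₂ C) ∘ₗ P.subtype) ∧
      Function.Exact ((LinearMap.snd R B₂ C) ∘ₗ P.subtype) (h₂ ∘ₗ π₂) ∧
      Function.Surjective ((LinearMap.fst R B₂ C) ∘ₗ P.subtype) := by
  refine ⟨?_, ?_, ?_⟩
  · intro b
    constructor
    · intro hb
      have hmem := (hP b).mp b.2
      simp only [LinearMap.coe_comp, Function.comp_apply, LinearMap.snd_apply,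
        Submodule.coe_subtype] at hb
      have h0 : g₂ (b : B₂ × C).1 = 0 := by
        rw [hmem, hb, map_zero]
      obtain ⟨a, ha⟩ := (hf₂g₂ _).mp h0
      refine ⟨a, ?_⟩
      apply Subtype.ext
      rw [hf a]
      exact Prod.ext ha hb.symm
    · rintro ⟨a, rfl⟩
      simp [hf a]
  · intro c
    constructor
    · intro hc
      simp only [LinearMap.coe_comp, Function.comp_apply] at hc
      obtain ⟨b₂, hb₂⟩ := (hg₂h₂ _).mp hc
      exact ⟨⟨(b₂, c), (hP _).mpr hb₂⟩, rfl⟩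
    · rintro ⟨b, rfl⟩
      have hmem := (hP b).mp b.2
      simp [← hmem, (hg₂h₂ _).mpr ⟨_, rfl⟩]
  · intro b₂
    obtain ⟨c, hc⟩ := hπ₂ (g₂ b₂)
    exact ⟨⟨(b₂, c), (hP _).mpr hc.symm⟩, rfl⟩
end
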